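/- Let ε > 0 and let G be an n-vertex graph with δ(G) ≥ (1/2 + ε)n, where 1/s is sufficiently small compared to ε and 1/n sufficiently small compared to 1/s. Let P be the s-uniform hypergraph on V(G) where an s-set S is an edge if and only if the induced subgraph G[S] has minimum degree at least (1/2 + ε/2)s. Then δ₁(P) ≥ (1 − e^{−√s})·C(n−1, s−1). -/

import Mathlib

open Finset

set_option maxHeartbeats 1600000


lemma AJ_identity (a b k j : ℕ) (hjk : j < k) :
    (a.choose (j+1) * b.choose (k-(j+1))) * ((j+1) * (b - (k - (j+1)))) =
    (a.choose j * b.choose (k-j)) * ((a - j) * (k - j)) := by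
  have hkj : k - (j+1) + 1 = k - j := by omega
  have e1 := Nat.choose_succ_right_eq a j
  have e2 := Nat.choose_succ_right_eq b (k - (j+1))
  calc (a.choose (j+1) * b.choose (k-(j+1))) * ((j+1) * (b - (k - (j+1))))
      = (a.choose (j+1) * (j+1)) * (b.choose (k-(j+1)) * (b - (k - (j+1)))) := by ring
    _ = (a.choose j * (a - j)) * (b.choose (k-(j+1)) * (b - (k - (j+1)))) := by rw [e1]
    _ = (a.choose j * (a - j)) * (b.choose (k-(j+1)+1) * (k-(j+1)+1)) := by rw [e2]
    _ = (a.choose j * b.choose (k-j)) * ((a - j) * (k - j)) := by rw [hkj]; ring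

lemma AJ_step (a b k j K : ℕ) (hjk : j < k)
    (h : (K+1) * ((j+1) * (b - (k - (j+1)))) ≤ K * ((a - j) * (k - j))) :
    (K+1) * (a.choose j * b.choose (k-j)) ≤ K * (a.choose (j+1) * b.choose (k-(j+1))) := by
  rcases Nat.eq_zero_or_pos (b - (k - (j+1))) with hD | hD
  · have hb : b < k - j := by omega
    have : b.choose (k-j) = 0 := Nat.choose_eq_zero_of_lt hb
    simp [this]
  · set A := a.choose j * b.choose (k-j) with hA
    set A' := a.choose (j+1) * b.choose (k-(j+1)) with hA'
    have hid := AJ_identity a b k j hjk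
    have key : (K+1) * A * ((j+1) * (b - (k - (j+1)))) ≤ K * A' * ((j+1) * (b - (k - (j+1)))) := by
      calc (K+1) * A * ((j+1) * (b - (k - (j+1))))
          = A * ((K+1) * ((j+1) * (b - (k-(j+1))))) := by ring
        _ ≤ A * (K * ((a-j)*(k-j))) := Nat.mul_le_mul_left A h
        _ = K * (A * ((a-j)*(k-j))) := by ring
        _ = K * (A' * ((j+1) * (b - (k - (j+1))))) := by rw [← hid]
        _ = K * A' * ((j+1) * (b - (k - (j+1)))) := by ring
    have hpos : 0 < (j+1) * (b - (k - (j+1))) := by positivity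
    exact Nat.le_of_mul_le_mul_right key hpos

lemma AJ_chain (a b k K m' : ℕ) (hm'k : m' ≤ k)
    (hstep : ∀ j < m', (K+1) * ((j+1) * (b - (k - (j+1)))) ≤ K * ((a - j) * (k - j))) :
    ∀ i j, j + i ≤ m' →
      (a.choose j * b.choose (k-j)) * (K+1)^i ≤ (a.choose (j+i) * b.choose (k-(j+i))) * K^i := by
  intro i
  induction i with
  | zero => intro j _; simp
  | succ i ih =>
    intro j hji
    have h1 : j + i < m' := by omega
    have h2 := ih j (by omega)
    have h3 := AJ_step a b k (j+i) K (by omega) (hstep _ h1)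
    calc (a.choose j * b.choose (k-j)) * (K+1)^(i+1)
        = ((a.choose j * b.choose (k-j)) * (K+1)^i) * (K+1) := by ring
      _ ≤ ((a.choose (j+i) * b.choose (k-(j+i))) * K^i) * (K+1) := Nat.mul_le_mul_right _ h2
      _ = ((K+1) * (a.choose (j+i) * b.choose (k-(j+i)))) * K^i := by ring
      _ ≤ (K * (a.choose (j+i+1) * b.choose (k-(j+i+1)))) * K^i := Nat.mul_le_mul_right _ h3
      _ = (a.choose (j+(i+1)) * b.choose (k-(j+(i+1)))) * K^(i+1) := by ring

lemma AJ_le_choose (a b k j : ℕ) (hjk : j ≤ k) :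
    a.choose j * b.choose (k-j) ≤ (a+b).choose k := by
  rw [Nat.add_choose_eq]
  have := Finset.single_le_sum (f := fun p : ℕ × ℕ => a.choose p.1 * b.choose p.2)
    (s := Finset.HasAntidiagonal.antidiagonal k) (fun p _ => Nat.zero_le _)
    (a := (j, k-j)) (by rw [Finset.HasAntidiagonal.mem_antidiagonal]; omega)
  simpa using this

lemma tail_bound (a b k m m' K : ℕ) (hK : 0 < K) (hm : m ≤ m') (hm'k : m' ≤ k)
    (hstep : ∀ j < m', (K+1) * ((j+1) * (b - (k - (j+1)))) ≤ K * ((a - j) * (k - j))) :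
    (∑ j ∈ Finset.range (m+1), (a.choose j * b.choose (k-j) : ℝ)) ≤
      (K+1) * ((K:ℝ)/(K+1))^(m'-m) * ((a+b).choose k) := by
  set β : ℝ := (K:ℝ)/(K+1) with hβ
  have hβ0 : 0 ≤ β := by positivity
  have hβ1 : β < 1 := by
    rw [hβ, div_lt_one (by positivity)]; exact by exact_mod_cast Nat.lt_succ_self K
  have hKpos : (0:ℝ) < (K:ℝ)+1 := by positivity
  -- pointwise bound
  have hpt : ∀ j ≤ m, (a.choose j * b.choose (k-j) : ℝ) ≤ β^(m'-j) * ((a+b).choose k) := by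
    intro j hj
    have hjm' : j ≤ m' := hj.trans hm
    have hchain := AJ_chain a b k K m' hm'k hstep (m'-j) j (by omega)
    have hje : j + (m' - j) = m' := by omega
    rw [hje] at hchain
    have hV : (a.choose m' * b.choose (k-m') : ℕ) ≤ (a+b).choose k := AJ_le_choose a b k m' hm'k
    have hcast : (a.choose j * b.choose (k-j) : ℝ) * ((K:ℝ)+1)^(m'-j)
        ≤ ((a+b).choose k : ℝ) * (K:ℝ)^(m'-j) := by
      have h1 : ((a.choose j * b.choose (k-j)) * (K+1)^(m'-j) : ℕ) ≤ ((a+b).choose k) * K^(m'-j) :=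
        hchain.trans (Nat.mul_le_mul_right _ hV)
      exact_mod_cast h1
    calc (a.choose j * b.choose (k-j) : ℝ)
        = ((a.choose j * b.choose (k-j) : ℝ) * ((K:ℝ)+1)^(m'-j)) / ((K:ℝ)+1)^(m'-j) := by
          field_simp
      _ ≤ (((a+b).choose k : ℝ) * (K:ℝ)^(m'-j)) / ((K:ℝ)+1)^(m'-j) := by
          apply div_le_div_of_nonneg_right hcast (by positivity) |>.trans_eq rfl
      _ = β^(m'-j) * ((a+b).choose k) := by
          rw [hβ, div_pow]; ring
  calc (∑ j ∈ Finset.range (m+1), (a.choose j * b.choose (k-j) : ℝ))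
      ≤ ∑ j ∈ Finset.range (m+1), β^(m'-j) * ((a+b).choose k) := by
        apply Finset.sum_le_sum
        intro j hj
        exact hpt j (by simpa [Nat.lt_succ_iff] using hj)
    _ = (∑ j ∈ Finset.range (m+1), β^(m'-j)) * ((a+b).choose k) := by
        rw [Finset.sum_mul]
    _ ≤ ((K+1) * β^(m'-m)) * ((a+b).choose k) := by
        apply mul_le_mul_of_nonneg_right _ (by positivity)
        have : ∀ j ∈ Finset.range (m+1), β^(m'-j) = β^(m'-m) * β^(m-j) := by
          intro j hj
          rw [← pow_add]
          congr 1
          simp [Nat.lt_succ_iff] at hj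
          omega
        rw [Finset.sum_congr rfl this, ← Finset.mul_sum]
        rw [mul_comm ((K:ℝ)+1) _]
        apply mul_le_mul_of_nonneg_left _ (by positivity)
        -- ∑_{j<m+1} β^(m-j) ≤ K+1
        have h1 : (∑ j ∈ Finset.range (m+1), β^(m-j)) = ∑ i ∈ Finset.range (m+1), β^i := by
          apply Finset.sum_nbij' (fun j => m - j) (fun i => m - i) <;>
            simp +contextual [Nat.lt_succ_iff] <;> omega
        rw [h1]
        have hgeo : (∑ i ∈ Finset.range (m+1), β^i) ≤ 1/(1-β) := by
          rw [geom_sum_eq (ne_of_lt hβ1)]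
          have h2 : (β ^ (m + 1) - 1) / (β - 1) = (1 - β^(m+1))/(1-β) := by
            rw [← neg_div_neg_eq]; ring_nf
          rw [h2]
          have : (0:ℝ) ≤ β^(m+1) := by positivity
          exact div_le_div_of_nonneg_right (by linarith) (by linarith)
        have : 1/(1-β) = (K:ℝ)+1 := by
          rw [hβ]; field_simp; ring
        linarith [hgeo, this]
    _ = (K+1) * β^(m'-m) * ((a+b).choose k) := by ring

variable {α : Type} [Fintype α] [DecidableEq α]

lemma count_small_inter (s m : ℕ) (W Nv : Finset α) (hd : Disjoint Nv W) :
    ((Finset.univ.powersetCard s).filter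
        (fun S => W ⊆ S ∧ (S ∩ Nv).card ≤ m)).card ≤
      ∑ j ∈ Finset.range (m+1),
        Nv.card.choose j * ((Finset.univ \ Nv) \ W).card.choose (s - W.card - j) := by
  classical
  set M : Finset α := (Finset.univ \ Nv) \ W with hM
  set T : Finset (Finset α × Finset α) :=
    (Finset.range (m+1)).biUnion
      (fun j => (Nv.powersetCard j) ×ˢ (M.powersetCard (s - W.card - j))) with hT
  have hcard : ((Finset.univ.powersetCard s).filter
      (fun S => W ⊆ S ∧ (S ∩ Nv).card ≤ m)).card ≤ T.card := by
    apply Finset.card_le_card_of_injOn (fun S => (S ∩ Nv, (S \ Nv) \ W))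
    · intro S hS
      simp only [Finset.mem_coe, Finset.mem_filter, Finset.mem_powersetCard] at hS
      obtain ⟨⟨hSu, hScard⟩, hWS, hSm⟩ := hS
      rw [hT, Finset.mem_coe, Finset.mem_biUnion]
      refine ⟨(S ∩ Nv).card, by simp [Nat.lt_succ_iff, hSm], ?_⟩
      rw [Finset.mem_product]
      constructor
      · rw [Finset.mem_powersetCard]; exact ⟨Finset.inter_subset_right, rfl⟩
      · rw [Finset.mem_powersetCard]
        constructor
        · intro y hy
          simp only [Finset.mem_sdiff] at hy
          simp only [hM, Finset.mem_sdiff]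
          exact ⟨⟨Finset.mem_univ y, hy.1.2⟩, hy.2⟩
        · have h1 : (S ∩ Nv).card + (S \ Nv).card = S.card :=
            Finset.card_inter_add_card_sdiff S Nv
          have hWsub : W ⊆ S \ Nv := by
            intro w hw
            simp only [Finset.mem_sdiff]
            exact ⟨hWS hw, fun hwN => (Finset.disjoint_left.mp hd hwN hw).elim⟩
          have h2 : ((S \ Nv) \ W).card = (S \ Nv).card - W.card := Finset.card_sdiff_of_subset hWsub
          have hWle := Finset.card_le_card hWsub
          show ((S \ Nv) \ W).card = s - W.card - (S ∩ Nv).card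
          omega
    · intro S₁ h₁ S₂ h₂ heq
      simp only [Finset.mem_coe, Finset.mem_filter, Finset.mem_powersetCard] at h₁ h₂
      have key : ∀ S : Finset α, W ⊆ S → S = (S ∩ Nv) ∪ (((S \ Nv) \ W) ∪ W) := by
        intro S hWS
        ext y
        simp only [Finset.mem_union, Finset.mem_inter, Finset.mem_sdiff]
        constructor
        · intro hy
          by_cases hN : y ∈ Nv
          · exact Or.inl ⟨hy, hN⟩
          · by_cases hW : y ∈ W
            · exact Or.inr (Or.inr hW)
            · exact Or.inr (Or.inl ⟨⟨hy, hN⟩, hW⟩)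
        · rintro (⟨hy, _⟩ | ⟨⟨hy, _⟩, _⟩ | hy)
          · exact hy
          · exact hy
          · exact hWS hy
      have e1 : S₁ ∩ Nv = S₂ ∩ Nv := congrArg Prod.fst heq
      have e2 : (S₁ \ Nv) \ W = (S₂ \ Nv) \ W := congrArg Prod.snd heq
      rw [key S₁ h₁.2.1, key S₂ h₂.2.1, e1, e2]
  refine hcard.trans ?_
  refine (Finset.card_biUnion_le).trans ?_
  apply Finset.sum_le_sum
  intro j _
  rw [Finset.card_product, Finset.card_powersetCard, Finset.card_powersetCard]

variable {α : Type} [Fintype α] [DecidableEq α]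

lemma card_containing (s : ℕ) (hs : 1 ≤ s) (x : α) :
    ((Finset.univ.powersetCard s).filter (fun S => x ∈ S)).card =
      (Fintype.card α - 1).choose (s - 1) := by
  classical
  have h : ((Finset.univ.powersetCard s).filter (fun S => x ∈ S)).card
      = ((Finset.univ.erase x).powersetCard (s-1)).card := by
    apply Finset.card_bij' (fun S _ => S.erase x) (fun T _ => insert x T)
    · intro S hS
      simp only [Finset.mem_filter] at hS
      exact Finset.insert_erase hS.2
    · intro T hT
      rw [Finset.mem_powersetCard] at hT
      have hx : x ∉ T := fun hx => (Finset.mem_erase.mp (hT.1 hx)).1 rfl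
      exact Finset.erase_insert hx
    · intro S hS
      simp only [Finset.mem_filter, Finset.mem_powersetCard] at hS
      rw [Finset.mem_powersetCard]
      constructor
      · intro y hy
        rw [Finset.mem_erase] at hy ⊢
        exact ⟨hy.1, Finset.mem_univ y⟩
      · rw [Finset.card_erase_of_mem hS.2, hS.1.2]
    · intro T hT
      rw [Finset.mem_powersetCard] at hT
      rw [Finset.mem_filter, Finset.mem_powersetCard]
      have hx : x ∉ T := fun hx => (Finset.mem_erase.mp (hT.1 hx)).1 rfl
      refine ⟨⟨Finset.subset_univ _, ?_⟩, Finset.mem_insert_self x T⟩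
      rw [Finset.card_insert_of_notMem hx, hT.2]
      omega
  rw [h, Finset.card_powersetCard, Finset.card_erase_of_mem (Finset.mem_univ x),
    Finset.card_univ]

lemma cast_sub_ge (a j : ℕ) : ((a:ℝ) - (j:ℝ)) ≤ ((a - j : ℕ) : ℝ) := by
  rcases le_or_gt j a with h | h
  · rw [Nat.cast_sub h]
  · have h1 : a - j = 0 := Nat.sub_eq_zero_of_le h.le
    rw [h1]
    have : (a:ℝ) ≤ (j:ℝ) := by exact_mod_cast h.le
    simp; linarith

lemma step_scalar (ε K : ℝ) (hε : 0 < ε) (hε2 : ε ≤ 1/2) (hK : 16 ≤ ε^2*K) :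
    (K+1)*((1/2+5*ε/8)*(1/2-15*ε/16)) ≤ K*((1/2+15*ε/16)*(1/2-11*ε/16)) := by
  have hKε : 32/ε ≤ K := by
    rw [div_le_iff₀ hε]
    nlinarith
  have hK0 : (0:ℝ) < K := lt_of_lt_of_le (by positivity) hKε
  have hsq : ε^2 ≤ 1/4 := by nlinarith
  have hK1 : 64 ≤ K := by nlinarith [mul_le_mul_of_nonneg_right hsq hK0.le]
  nlinarith [mul_le_mul_of_nonneg_left hKε (le_of_lt hε), sq_nonneg ε, mul_pos hε hε]

lemma step_nat (ε : ℝ) (n s K m' a b k : ℕ)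
    (hε : 0 < ε) (hε2 : ε ≤ 1/2)
    (hK : 16 ≤ ε^2*(K:ℝ))
    (hs : 200 ≤ ε*(s:ℝ))
    (hn : 100*((s:ℝ)+2) ≤ ε*(n:ℝ))
    (ha : ((1:ℝ)/2+ε)*(n:ℝ) - 2 ≤ (a:ℝ))
    (hb : (b:ℝ) ≤ (n:ℝ) - (a:ℝ))
    (hk1 : (s:ℝ) - 2 ≤ (k:ℝ)) (hk2 : (k:ℝ) ≤ (s:ℝ))
    (hm' : (m':ℝ) ≤ ((1:ℝ)/2+5*ε/8)*(s:ℝ)) :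
    ∀ j < m', (K+1) * ((j+1) * (b - (k - (j+1)))) ≤ K * ((a - j) * (k - j)) := by
  intro j hj
  have hss : (0:ℝ) ≤ (s:ℝ) := Nat.cast_nonneg s
  have hnn' : (0:ℝ) ≤ (n:ℝ) := Nat.cast_nonneg n
  have hεs2 : ε*(s:ℝ) ≤ (1/2)*(s:ℝ) := mul_le_mul_of_nonneg_right hε2 hss
  have hεn2 : ε*(n:ℝ) ≤ (1/2)*(n:ℝ) := mul_le_mul_of_nonneg_right hε2 hnn'
  have hs0 : (400:ℝ) ≤ s := by linarith
  have hn0 : (0:ℝ) < n := by nlinarith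
  -- key real bounds
  have hA : ((1:ℝ)/2+15*ε/16)*(n:ℝ) ≤ (a:ℝ) - (m':ℝ) := by nlinarith
  have hC : ((1:ℝ)/2-11*ε/16)*(s:ℝ) ≤ (k:ℝ) - (m':ℝ) := by nlinarith
  have hB : (b:ℝ) ≤ ((1:ℝ)/2-15*ε/16)*(n:ℝ) := by nlinarith
  have hAp : (0:ℝ) ≤ ((1:ℝ)/2+15*ε/16)*(n:ℝ) := by nlinarith
  have hCp : (0:ℝ) ≤ ((1:ℝ)/2-11*ε/16)*(s:ℝ) := by nlinarith
  have hKp : (0:ℝ) ≤ (K:ℝ) := Nat.cast_nonneg K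
  have hjm' : (j:ℝ) + 1 ≤ (m':ℝ) := by exact_mod_cast hj
  have hm'p : (0:ℝ) ≤ (m':ℝ) := Nat.cast_nonneg m'
  have hbp : (0:ℝ) ≤ (b:ℝ) := Nat.cast_nonneg b
  have hscalar := step_scalar ε K hε hε2 hK
  -- cast the goal
  rw [← Nat.cast_le (α := ℝ)]
  push_cast
  -- bound LHS
  have hL1 : ((b - (k - (j+1)) : ℕ) : ℝ) ≤ (b:ℝ) := by exact_mod_cast Nat.sub_le _ _
  have hL : ((K:ℝ)+1) * (((j:ℝ)+1) * ((b - (k - (j+1)) : ℕ) : ℝ)) ≤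
      ((K:ℝ)+1) * ((m':ℝ) * (b:ℝ)) := by
    apply mul_le_mul_of_nonneg_left _ (by positivity)
    apply mul_le_mul hjm' hL1 (by positivity) hm'p
  -- bound RHS
  have hR1 : (a:ℝ) - (m':ℝ) ≤ ((a - j : ℕ) : ℝ) := by
    have := cast_sub_ge a j
    have hjm : (j:ℝ) ≤ (m':ℝ) := by linarith
    linarith
  have hR2 : (k:ℝ) - (m':ℝ) ≤ ((k - j : ℕ) : ℝ) := by
    have := cast_sub_ge k j
    linarith
  have hR : (K:ℝ) * (((a:ℝ) - m') * ((k:ℝ) - m')) ≤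
      (K:ℝ) * (((a - j : ℕ) : ℝ) * ((k - j : ℕ) : ℝ)) := by
    apply mul_le_mul_of_nonneg_left _ hKp
    apply mul_le_mul hR1 hR2 (by linarith) (by positivity)
  -- middle inequality
  have hmid : ((K:ℝ)+1) * ((m':ℝ) * (b:ℝ)) ≤ (K:ℝ) * (((a:ℝ) - m') * ((k:ℝ) - m')) := by
    have h1 : ((K:ℝ)+1) * ((m':ℝ) * (b:ℝ)) ≤
        ((K:ℝ)+1) * ((((1:ℝ)/2+5*ε/8)*(s:ℝ)) * (((1:ℝ)/2-15*ε/16)*(n:ℝ))) := by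
      apply mul_le_mul_of_nonneg_left _ (by positivity)
      apply mul_le_mul hm' hB hbp (by nlinarith)
    have h2 : (K:ℝ) * ((((1:ℝ)/2+15*ε/16)*(n:ℝ)) * (((1:ℝ)/2-11*ε/16)*(s:ℝ))) ≤
        (K:ℝ) * (((a:ℝ) - m') * ((k:ℝ) - m')) := by
      apply mul_le_mul_of_nonneg_left _ hKp
      apply mul_le_mul hA hC hCp (by linarith)
    have h3 : ((K:ℝ)+1) * ((((1:ℝ)/2+5*ε/8)*(s:ℝ)) * (((1:ℝ)/2-15*ε/16)*(n:ℝ))) ≤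
        (K:ℝ) * ((((1:ℝ)/2+15*ε/16)*(n:ℝ)) * (((1:ℝ)/2-11*ε/16)*(s:ℝ))) := by
      have hns : (0:ℝ) ≤ (n:ℝ)*(s:ℝ) := by positivity
      nlinarith [mul_le_mul_of_nonneg_right hscalar hns]
    linarith
  linarith

lemma decay (ε : ℝ) (hε : 0 < ε) (K s Δ : ℕ)
    (hΔ : ε*(s:ℝ)/16 ≤ (Δ:ℝ))
    (hs1 : 32*(K:ℝ)*((K:ℝ)+1)/ε ≤ (s:ℝ))
    (hs2 : (96*((K:ℝ)+1)/ε)^2 ≤ (s:ℝ)) :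
    ((K:ℝ)+1) * (s:ℝ) * ((K:ℝ)/((K:ℝ)+1))^Δ ≤ Real.exp (-Real.sqrt (s:ℝ)) := by
  set c : ℝ := ε/(16*((K:ℝ)+1)) with hc
  have hK1 : (0:ℝ) < (K:ℝ)+1 := by positivity
  have hcpos : 0 < c := by rw [hc]; positivity
  have hs0 : (0:ℝ) < s := lt_of_lt_of_le (by positivity) hs2
  have hβ : (K:ℝ)/((K:ℝ)+1) ≤ Real.exp (-(1/((K:ℝ)+1))) := by
    have := Real.add_one_le_exp (-(1/((K:ℝ)+1)))
    have he : (K:ℝ)/((K:ℝ)+1) = -(1/((K:ℝ)+1)) + 1 := by field_simp; ring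
    linarith
  have hβ0 : (0:ℝ) ≤ (K:ℝ)/((K:ℝ)+1) := by positivity
  have hpow : ((K:ℝ)/((K:ℝ)+1))^Δ ≤ Real.exp (-((Δ:ℝ)/((K:ℝ)+1))) := by
    calc ((K:ℝ)/((K:ℝ)+1))^Δ ≤ (Real.exp (-(1/((K:ℝ)+1))))^Δ := pow_le_pow_left₀ hβ0 hβ Δ
      _ = Real.exp ((Δ:ℕ) * (-(1/((K:ℝ)+1)))) := by rw [← Real.exp_nat_mul]
      _ = Real.exp (-((Δ:ℝ)/((K:ℝ)+1))) := by congr 1; field_simp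
  have hΔc : c * (s:ℝ) ≤ (Δ:ℝ)/((K:ℝ)+1) := by
    rw [hc, div_mul_eq_mul_div, div_le_div_iff₀ (by positivity) hK1]
    calc ε * (s:ℝ) * ((K:ℝ)+1) = (ε * (s:ℝ)/16) * (16*((K:ℝ)+1)) := by ring
      _ ≤ (Δ:ℝ) * (16*((K:ℝ)+1)) := mul_le_mul_of_nonneg_right hΔ (by positivity)
  have hpow2 : ((K:ℝ)/((K:ℝ)+1))^Δ ≤ Real.exp (-(c*(s:ℝ))) := by
    refine hpow.trans (Real.exp_le_exp.mpr (by linarith))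
  have hKexp : (K:ℝ)+1 ≤ Real.exp (K:ℝ) := Real.add_one_le_exp (K:ℝ)
  have hsqrt : Real.sqrt (s:ℝ) * Real.sqrt (s:ℝ) = (s:ℝ) := Real.mul_self_sqrt hs0.le
  have hsexp : (s:ℝ) ≤ Real.exp (2*Real.sqrt (s:ℝ)) := by
    have h1 : Real.sqrt (s:ℝ) ≤ Real.exp (Real.sqrt (s:ℝ)) := by
      have := Real.add_one_le_exp (Real.sqrt (s:ℝ))
      linarith
    calc (s:ℝ) = Real.sqrt (s:ℝ) * Real.sqrt (s:ℝ) := hsqrt.symm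
      _ ≤ Real.exp (Real.sqrt (s:ℝ)) * Real.exp (Real.sqrt (s:ℝ)) := by
          apply mul_le_mul h1 h1 (Real.sqrt_nonneg _) (Real.exp_nonneg _)
      _ = Real.exp (2*Real.sqrt (s:ℝ)) := by rw [← Real.exp_add]; ring_nf
  have hfin : (K:ℝ) + 3*Real.sqrt (s:ℝ) ≤ c * (s:ℝ) := by
    have hcs2 : c * (s:ℝ)/2 = ε*(s:ℝ)/(32*((K:ℝ)+1)) := by
      rw [hc]; field_simp; ring
    have h1 : (K:ℝ) ≤ c * (s:ℝ)/2 := by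
      rw [hcs2, le_div_iff₀ (by positivity)]
      have := (div_le_iff₀ hε).mp hs1
      nlinarith
    have h2 : 3*Real.sqrt (s:ℝ) ≤ c * (s:ℝ)/2 := by
      have hq : 96*((K:ℝ)+1)/ε ≤ Real.sqrt (s:ℝ) := by
        rw [show (96*((K:ℝ)+1)/ε) = Real.sqrt ((96*((K:ℝ)+1)/ε)^2) from
          (Real.sqrt_sq (by positivity)).symm]
        exact Real.sqrt_le_sqrt hs2
      have h3 : c * (s:ℝ)/2 = (ε/(32*((K:ℝ)+1))) * ((Real.sqrt (s:ℝ))*(Real.sqrt (s:ℝ))) := by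
        rw [hsqrt, hc]; field_simp; ring
      rw [h3]
      have h4 : 3 * Real.sqrt (s:ℝ) =
          (ε/(32*((K:ℝ)+1))) * ((96*((K:ℝ)+1)/ε) * Real.sqrt (s:ℝ)) := by
        field_simp; ring
      rw [h4]
      apply mul_le_mul_of_nonneg_left _ (by positivity)
      apply mul_le_mul_of_nonneg_right hq (Real.sqrt_nonneg _)
    linarith
  calc ((K:ℝ)+1) * (s:ℝ) * ((K:ℝ)/((K:ℝ)+1))^Δ
      ≤ (Real.exp (K:ℝ) * Real.exp (2*Real.sqrt (s:ℝ))) * Real.exp (-(c*(s:ℝ))) := by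
        apply mul_le_mul _ hpow2 (by positivity) (by positivity)
        apply mul_le_mul hKexp hsexp hs0.le (Real.exp_nonneg _)
    _ = Real.exp ((K:ℝ) + 2*Real.sqrt (s:ℝ) - c*(s:ℝ)) := by
        rw [← Real.exp_add, ← Real.exp_add]; ring_nf
    _ ≤ Real.exp (-Real.sqrt (s:ℝ)) := Real.exp_le_exp.mpr (by linarith)

/-- Degree inheritance, Dirac form: for `ε ≫ 1/s ≫ 1/n` and any `n`-vertex
graph `G` with `δ(G) ≥ (1/2+ε)n`, every vertex lies in at least `(1 − e^{−√s})·C(n−1,s−1)`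
many `s`-sets `S` with `δ(G[S]) ≥ (1/2+ε/2)s`. -/
theorem stmt6 (ε : ℝ) (hε : 0 < ε) :
    ∃ s₀ : ℕ, ∀ s : ℕ, s₀ ≤ s → ∃ n₀ : ℕ, ∀ n : ℕ, n₀ ≤ n →
    ∀ (α : Type) [Fintype α] [DecidableEq α] (G : SimpleGraph α) [DecidableRel G.Adj],
      Fintype.card α = n →
      (∀ v : α, ((1:ℝ)/2 + ε) * n ≤ G.degree v) →
      ∀ x : α,
      (1 - Real.exp (-Real.sqrt s)) * (((n - 1).choose (s - 1) : ℕ) : ℝ) ≤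
        (((Finset.univ.powersetCard s).filter fun S : Finset α => x ∈ S ∧
          ∀ v ∈ S, ((1:ℝ)/2 + ε/2) * s ≤ (((S.erase v).filter (G.Adj v)).card : ℝ)).card : ℝ) := by
  rcases le_or_gt ε (1/2) with hε2 | hε2
  swap
  · -- ε > 1/2 : hypothesis is contradictory
    refine ⟨1, fun s _ => ⟨1, fun n hn α _ _ G _ hcard hdeg x => ?_⟩⟩
    exfalso
    have h1 := hdeg x
    have h2 : G.degree x < Fintype.card α := G.degree_lt_card_verts x
    rw [hcard] at h2
    have h3 : (G.degree x : ℝ) < (n : ℝ) := by exact_mod_cast h2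
    have h4 : (1:ℝ) ≤ (n : ℝ) := by exact_mod_cast hn
    nlinarith
  · -- main case
    set K : ℕ := ⌈(16:ℝ)/ε^2⌉₊ with hKdef
    have hK0 : 0 < K := Nat.ceil_pos.mpr (by positivity)
    have hK : 16 ≤ ε^2*(K:ℝ) := by
      have h1 : (16:ℝ)/ε^2 ≤ (K:ℝ) := Nat.le_ceil _
      have h2 : (0:ℝ) < ε^2 := by positivity
      rw [div_le_iff₀ h2] at h1
      linarith
    set S₀ : ℝ := (400:ℝ)/ε + 32*(K:ℝ)*((K:ℝ)+1)/ε + (96*((K:ℝ)+1)/ε)^2 with hS₀def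
    refine ⟨⌈S₀⌉₊ + 1, ?_⟩
    intro s hss₀
    have hsS₀ : S₀ ≤ (s:ℝ) := by
      calc S₀ ≤ (⌈S₀⌉₊ : ℝ) := Nat.le_ceil _
        _ ≤ (s:ℝ) := by exact_mod_cast Nat.le_of_succ_le hss₀
    have ht1 : (0:ℝ) ≤ (400:ℝ)/ε := by positivity
    have ht2 : (0:ℝ) ≤ 32*(K:ℝ)*((K:ℝ)+1)/ε := by positivity
    have ht3 : (0:ℝ) ≤ (96*((K:ℝ)+1)/ε)^2 := by positivity
    have hs400 : 400 ≤ ε*(s:ℝ) := by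
      have : (400:ℝ)/ε ≤ (s:ℝ) := by rw [hS₀def] at hsS₀; linarith
      rw [div_le_iff₀ hε] at this; linarith
    have hsdk1 : 32*(K:ℝ)*((K:ℝ)+1)/ε ≤ (s:ℝ) := by rw [hS₀def] at hsS₀; linarith
    have hsdk2 : (96*((K:ℝ)+1)/ε)^2 ≤ (s:ℝ) := by rw [hS₀def] at hsS₀; linarith
    have hsreal : (800:ℝ) ≤ (s:ℝ) := by nlinarith
    have hs800 : 800 ≤ s := by exact_mod_cast hsreal
    -- choose n₀
    refine ⟨⌈100*((s:ℝ)+2)/ε⌉₊ + s + 3, ?_⟩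
    intro n hnn₀
    intro α instF instD G instA hcard hdeg x
    have hns3 : s + 3 ≤ n := by omega
    have hnreal : 100*((s:ℝ)+2) ≤ ε*(n:ℝ) := by
      have h1 : (⌈100*((s:ℝ)+2)/ε⌉₊ : ℝ) ≤ (n:ℝ) := by
        have : ⌈100*((s:ℝ)+2)/ε⌉₊ ≤ n := by omega
        exact_mod_cast this
      have h2 : 100*((s:ℝ)+2)/ε ≤ (n:ℝ) := (Nat.le_ceil _).trans h1
      rw [div_le_iff₀ hε] at h2; linarith
    -- floors
    set m : ℕ := ⌊((1:ℝ)/2+ε/2)*(s:ℝ)⌋₊ with hmdef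
    set m' : ℕ := ⌊((1:ℝ)/2+5*ε/8)*(s:ℝ)⌋₊ with hm'def
    have hsposR : (0:ℝ) < (s:ℝ) := by linarith
    have hmm' : m ≤ m' := Nat.floor_le_floor (by nlinarith)
    have hm'le : (m':ℝ) ≤ ((1:ℝ)/2+5*ε/8)*(s:ℝ) := Nat.floor_le (by positivity)
    have hmle : (m:ℝ) ≤ ((1:ℝ)/2+ε/2)*(s:ℝ) := Nat.floor_le (by positivity)
    have hm'gt : ((1:ℝ)/2+5*ε/8)*(s:ℝ) < (m':ℝ) + 1 := Nat.lt_floor_add_one _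
    have hmgt : ((1:ℝ)/2+ε/2)*(s:ℝ) < (m:ℝ) + 1 := Nat.lt_floor_add_one _
    have hεs2 : ε*(s:ℝ) ≤ (1/2)*(s:ℝ) :=
      mul_le_mul_of_nonneg_right hε2 hsposR.le
    have hm's2 : m' + 2 ≤ s := by
      have : (m':ℝ) + 2 ≤ (s:ℝ) := by nlinarith
      exact_mod_cast this
    have hΔ : ε*(s:ℝ)/16 ≤ ((m' - m : ℕ):ℝ) := by
      have hcast : ((m' - m : ℕ):ℝ) = (m':ℝ) - (m:ℝ) := by
        rw [Nat.cast_sub hmm']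
      rw [hcast]
      nlinarith
    -- the three finsets
    classical
    set A : Finset (Finset α) :=
      (Finset.univ.powersetCard s).filter (fun S : Finset α => x ∈ S) with hAdef
    have hn2 : 2 ≤ n := by omega
    have hAcard : A.card = (n-1).choose (s-1) := by
      rw [hAdef, card_containing s (by omega) x, hcard]
    -- bad sets
    set Bv : α → Finset (Finset α) := fun v =>
      (Finset.univ.powersetCard s).filter
        (fun S => (insert x {v} : Finset α) ⊆ S ∧
          (S ∩ (G.neighborFinset v \ insert x {v})).card ≤ m) with hBvdef
    set p : Finset α → Prop := fun S =>
      ∀ v ∈ S, ((1:ℝ)/2 + ε/2) * s ≤ (((S.erase v).filter (G.Adj v)).card : ℝ) with hpdef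
    have hsplit : ((Finset.univ.powersetCard s).filter
          (fun S : Finset α => x ∈ S ∧ p S)).card
        + ((Finset.univ.powersetCard s).filter
          (fun S : Finset α => x ∈ S ∧ ¬ p S)).card = A.card := by
      rw [hAdef, ← Finset.filter_filter, ← Finset.filter_filter]
      exact Finset.card_filter_add_card_filter_not _
    set Bad : Finset (Finset α) := (Finset.univ.powersetCard s).filter
      (fun S : Finset α => x ∈ S ∧ ¬ p S) with hBaddef
    -- Bad ⊆ ⋃ Bv
    have hsub : Bad ⊆ Finset.univ.biUnion Bv := by
      intro S hS
      rw [hBaddef, Finset.mem_filter] at hS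
      obtain ⟨hSP, hxS, hnp⟩ := hS
      have hex : ∃ v ∈ S, ((((S.erase v).filter (G.Adj v)).card : ℝ) < ((1:ℝ)/2+ε/2)*(s:ℝ)) := by
        by_contra hcon
        push_neg at hcon
        exact hnp (by rw [hpdef]; exact hcon)
      obtain ⟨v, hvS, hdeglt⟩ := hex
      rw [Finset.mem_biUnion]
      refine ⟨v, Finset.mem_univ v, ?_⟩
      rw [hBvdef, Finset.mem_filter]
      refine ⟨hSP, ?_, ?_⟩
      · rw [Finset.insert_subset_iff, Finset.singleton_subset_iff]
        exact ⟨hxS, hvS⟩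
      · have hsub2 : S ∩ (G.neighborFinset v \ insert x {v}) ⊆
            (S.erase v).filter (G.Adj v) := by
          intro y hy
          rw [Finset.mem_inter, Finset.mem_sdiff, SimpleGraph.mem_neighborFinset] at hy
          rw [Finset.mem_filter, Finset.mem_erase]
          refine ⟨⟨?_, hy.1⟩, hy.2.1⟩
          intro hyv
          exact hy.2.2 (by rw [hyv]; exact Finset.mem_insert_of_mem (Finset.mem_singleton_self v))
        refine (Finset.card_le_card hsub2).trans ?_
        exact Nat.le_floor hdeglt.le
    have hBadle : Bad.card ≤ ∑ v ∈ Finset.univ, (Bv v).card :=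
      (Finset.card_le_card hsub).trans (Finset.card_biUnion_le)
    -- per-vertex bound
    have hperv : ∀ v : α, ((Bv v).card : ℝ) ≤
        ((K:ℝ)+1) * ((K:ℝ)/((K:ℝ)+1))^(m'-m) *
          ((n - (insert x ({v}:Finset α)).card).choose (s - (insert x ({v}:Finset α)).card)) := by
      intro v
      set W : Finset α := insert x {v} with hWdef
      set Nv : Finset α := G.neighborFinset v \ W with hNvdef
      set Mv : Finset α := (Finset.univ \ Nv) \ W with hMvdef
      have hdisj : Disjoint Nv W := sdiff_disjoint
      have hw2 : W.card ≤ 2 := by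
        refine (Finset.card_insert_le _ _).trans ?_
        simp
      have hw1 : 1 ≤ W.card := Finset.card_pos.mpr ⟨x, Finset.mem_insert_self _ _⟩
      have hwn : Nv.card + W.card ≤ n := by
        rw [← Finset.card_union_of_disjoint hdisj, ← hcard]
        exact Finset.card_le_card (Finset.subset_univ _) |>.trans (le_of_eq Finset.card_univ.symm) |>.trans (le_of_eq rfl)
      have hMvcard : Mv.card = n - Nv.card - W.card := by
        rw [hMvdef]
        rw [Finset.card_sdiff_of_subset (by
          intro y hy
          rw [Finset.mem_sdiff]
          exact ⟨Finset.mem_univ y, fun hyN => Finset.disjoint_left.mp hdisj hyN hy⟩)]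
        rw [Finset.card_sdiff_of_subset (Finset.subset_univ _), Finset.card_univ, hcard]
      have habn : Nv.card + Mv.card = n - W.card := by omega
      -- count
      have h1 : (Bv v).card ≤ ∑ j ∈ Finset.range (m+1),
          Nv.card.choose j * Mv.card.choose (s - W.card - j) := by
        refine le_trans (le_of_eq rfl) ?_
        exact count_small_inter s m W Nv hdisj
      -- step hypothesis
      have hdegv := hdeg v
      have haNv : ((1:ℝ)/2+ε)*(n:ℝ) - 2 ≤ (Nv.card:ℝ) := by
        have h2 : G.degree v ≤ Nv.card + W.card := by
          rw [hNvdef, ← SimpleGraph.card_neighborFinset_eq_degree]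
          exact Finset.card_le_card_sdiff_add_card
        have h3 : (G.degree v : ℝ) ≤ (Nv.card:ℝ) + 2 := by
          have : G.degree v ≤ Nv.card + 2 := h2.trans (by omega)
          exact_mod_cast this
        linarith
      have hbNv : (Mv.card:ℝ) ≤ (n:ℝ) - (Nv.card:ℝ) := by
        have : Mv.card + Nv.card ≤ n := by omega
        have := (Nat.cast_le (α := ℝ)).mpr this
        push_cast at this
        linarith
      have hk1 : (s:ℝ) - 2 ≤ ((s - W.card : ℕ):ℝ) := by
        have h4 : s - 2 ≤ s - W.card := by omega
        have h5 := (Nat.cast_le (α := ℝ)).mpr h4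
        have h6 : ((s - 2 : ℕ):ℝ) = (s:ℝ) - 2 := by
          rw [Nat.cast_sub (by omega)]; norm_num
        rw [h6] at h5
        exact h5
      have hk2 : ((s - W.card : ℕ):ℝ) ≤ (s:ℝ) := by
        exact_mod_cast Nat.sub_le s W.card
      have hstep := step_nat ε n s K m' Nv.card Mv.card (s - W.card) hε hε2 hK
        (by linarith) hnreal haNv hbNv hk1 hk2 hm'le
      have hm'k : m' ≤ s - W.card := by omega
      have h2 := tail_bound Nv.card Mv.card (s - W.card) m m' K hK0 hmm' hm'k hstep
      have h1R : ((Bv v).card : ℝ) ≤ ∑ j ∈ Finset.range (m+1),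
          ((Nv.card.choose j * Mv.card.choose (s - W.card - j) : ℕ) : ℝ) := by
        rw [← Nat.cast_sum]
        exact_mod_cast h1
      have hsum_eq : ∑ j ∈ Finset.range (m+1),
          ((Nv.card.choose j * Mv.card.choose (s - W.card - j) : ℕ) : ℝ)
          = ∑ j ∈ Finset.range (m+1),
          ((Nv.card.choose j : ℝ) * (Mv.card.choose ((s - W.card) - j) : ℝ)) := by
        apply Finset.sum_congr rfl
        intro j _
        push_cast
        ring
      rw [hsum_eq] at h1R
      have hab : Nv.card + Mv.card = n - W.card := habn
      calc ((Bv v).card : ℝ)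
          ≤ ∑ j ∈ Finset.range (m+1),
            ((Nv.card.choose j : ℝ) * (Mv.card.choose ((s - W.card) - j) : ℝ)) := h1R
        _ ≤ ((K:ℝ)+1) * ((K:ℝ)/((K:ℝ)+1))^(m'-m) *
            (((Nv.card + Mv.card).choose (s - W.card) : ℕ) : ℝ) := h2
        _ = ((K:ℝ)+1) * ((K:ℝ)/((K:ℝ)+1))^(m'-m) *
            (((n - W.card).choose (s - W.card) : ℕ) : ℝ) := by rw [hab]
    -- specialize: v = x gives W.card = 1, v ≠ x gives W.card = 2
    have hwx : (insert x ({x}:Finset α)).card = 1 := by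
      rw [Finset.insert_eq_self.mpr (Finset.mem_singleton_self x)]
      exact Finset.card_singleton x
    have hwne : ∀ v : α, v ≠ x → (insert x ({v}:Finset α)).card = 2 := by
      intro v hv
      rw [Finset.card_insert_of_notMem (by
        rw [Finset.mem_singleton]; exact fun h => hv h.symm)]
      simp
    set β : ℝ := (K:ℝ)/((K:ℝ)+1) with hβdef
    have hβ0 : (0:ℝ) ≤ β := by positivity
    have hCC : ((n-1) * ((n-2).choose (s-2)) : ℕ) = ((n-1).choose (s-1)) * (s-1) := by
      have h := Nat.add_one_mul_choose_eq (n-2) (s-2)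
      have e1 : n - 2 + 1 = n - 1 := by omega
      have e2 : s - 2 + 1 = s - 1 := by omega
      rw [e1, e2] at h
      exact h
    -- sum up
    have hBadR : ((Bad.card : ℕ) : ℝ) ≤
        Real.exp (-Real.sqrt (s:ℝ)) * (((n-1).choose (s-1) : ℕ) : ℝ) := by
      have hsum : ((Bad.card : ℕ) : ℝ) ≤ ∑ v ∈ Finset.univ, ((Bv v).card : ℝ) := by
        rw [← Nat.cast_sum]
        exact_mod_cast hBadle
      have hsplit2 : ∑ v ∈ Finset.univ, ((Bv v).card : ℝ)
          = ((Bv x).card : ℝ) + ∑ v ∈ Finset.univ.erase x, ((Bv v).card : ℝ) := by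
        rw [← Finset.add_sum_erase _ _ (Finset.mem_univ x)]
      have hx1 : ((Bv x).card : ℝ) ≤ ((K:ℝ)+1) * β^(m'-m) * (((n-1).choose (s-1) : ℕ) : ℝ) := by
        have := hperv x
        rw [hwx] at this
        exact this
      have hv2 : ∀ v ∈ Finset.univ.erase x,
          ((Bv v).card : ℝ) ≤ ((K:ℝ)+1) * β^(m'-m) * (((n-2).choose (s-2) : ℕ) : ℝ) := by
        intro v hv
        have hvx : v ≠ x := (Finset.mem_erase.mp hv).1
        have := hperv v
        rw [hwne v hvx] at this
        exact this
      have hcount : (Finset.univ.erase x).card = n - 1 := by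
        rw [Finset.card_erase_of_mem (Finset.mem_univ x), Finset.card_univ, hcard]
      have hsum2 : ∑ v ∈ Finset.univ.erase x, ((Bv v).card : ℝ) ≤
          ((n:ℝ)-1) * (((K:ℝ)+1) * β^(m'-m) * (((n-2).choose (s-2) : ℕ) : ℝ)) := by
        calc ∑ v ∈ Finset.univ.erase x, ((Bv v).card : ℝ)
            ≤ ∑ v ∈ Finset.univ.erase x,
              (((K:ℝ)+1) * β^(m'-m) * (((n-2).choose (s-2) : ℕ) : ℝ)) :=
              Finset.sum_le_sum hv2
          _ = ((Finset.univ.erase x).card : ℝ) *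
              (((K:ℝ)+1) * β^(m'-m) * (((n-2).choose (s-2) : ℕ) : ℝ)) := by
              rw [Finset.sum_const, nsmul_eq_mul]
          _ = ((n:ℝ)-1) * (((K:ℝ)+1) * β^(m'-m) * (((n-2).choose (s-2) : ℕ) : ℝ)) := by
              rw [hcount]
              congr 1
              rw [Nat.cast_sub (by omega)]
              norm_num
      have hCCr : ((n:ℝ)-1) * (((n-2).choose (s-2) : ℕ) : ℝ)
          = ((s:ℝ)-1) * (((n-1).choose (s-1) : ℕ) : ℝ) := by
        have := congrArg (Nat.cast (R := ℝ)) hCC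
        push_cast at this
        rw [Nat.cast_sub (by omega : 1 ≤ n), Nat.cast_sub (by omega : 1 ≤ s)] at this
        push_cast at this
        linarith
      have htotal : ((Bad.card : ℕ) : ℝ) ≤
          ((K:ℝ)+1) * (s:ℝ) * β^(m'-m) * (((n-1).choose (s-1) : ℕ) : ℝ) := by
        have h5 : ((Bad.card : ℕ) : ℝ) ≤
            ((K:ℝ)+1) * β^(m'-m) * (((n-1).choose (s-1) : ℕ) : ℝ)
            + ((n:ℝ)-1) * (((K:ℝ)+1) * β^(m'-m) * (((n-2).choose (s-2) : ℕ) : ℝ)) := by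
          rw [hsplit2] at hsum
          linarith
        have h6 : ((n:ℝ)-1) * (((K:ℝ)+1) * β^(m'-m) * (((n-2).choose (s-2) : ℕ) : ℝ))
            = ((K:ℝ)+1) * β^(m'-m) * (((s:ℝ)-1) * (((n-1).choose (s-1) : ℕ) : ℝ)) := by
          rw [← hCCr]; ring
        rw [h6] at h5
        calc ((Bad.card : ℕ) : ℝ)
            ≤ ((K:ℝ)+1) * β^(m'-m) * (((n-1).choose (s-1) : ℕ) : ℝ)
              + ((K:ℝ)+1) * β^(m'-m) * (((s:ℝ)-1) * (((n-1).choose (s-1) : ℕ) : ℝ)) := h5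
          _ = ((K:ℝ)+1) * (s:ℝ) * β^(m'-m) * (((n-1).choose (s-1) : ℕ) : ℝ) := by ring
      have hdec := decay ε hε K s (m'-m) hΔ hsdk1 hsdk2
      calc ((Bad.card : ℕ) : ℝ)
          ≤ ((K:ℝ)+1) * (s:ℝ) * β^(m'-m) * (((n-1).choose (s-1) : ℕ) : ℝ) := htotal
        _ ≤ Real.exp (-Real.sqrt (s:ℝ)) * (((n-1).choose (s-1) : ℕ) : ℝ) := by
            apply mul_le_mul_of_nonneg_right _ (Nat.cast_nonneg _)
            exact hdec
    -- conclude
    have hgoal : (((Finset.univ.powersetCard s).filter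
        (fun S : Finset α => x ∈ S ∧ p S)).card : ℝ)
        = (((n-1).choose (s-1) : ℕ) : ℝ) - ((Bad.card : ℕ) : ℝ) := by
      have := hsplit
      rw [hAcard] at this
      have : (((Finset.univ.powersetCard s).filter
          (fun S : Finset α => x ∈ S ∧ p S)).card : ℝ) + ((Bad.card : ℕ) : ℝ)
          = (((n-1).choose (s-1) : ℕ) : ℝ) := by exact_mod_cast this
      linarith
    have hexp1 : Real.exp (-Real.sqrt (s:ℝ)) ≤ 1 := by
      rw [Real.exp_le_one_iff]
      simp [Real.sqrt_nonneg]
    calc (1 - Real.exp (-Real.sqrt (s:ℝ))) * (((n-1).choose (s-1) : ℕ) : ℝ)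
        = (((n-1).choose (s-1) : ℕ) : ℝ)
          - Real.exp (-Real.sqrt (s:ℝ)) * (((n-1).choose (s-1) : ℕ) : ℝ) := by ring
      _ ≤ (((n-1).choose (s-1) : ℕ) : ℝ) - ((Bad.card : ℕ) : ℝ) := by linarith [hBadR]
      _ = (((Finset.univ.powersetCard s).filter
            (fun S : Finset α => x ∈ S ∧ p S)).card : ℝ) := hgoal.symm
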